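/- arXiv:1701.07639 — 2 statements merged into one kernel-verified Lean document; each statement's English description precedes it below -/
import Mathlib

section
/- Fix an even integer t ≥ 4. For every integer d ≥ 2 with d ≡ 0 (mod 2(t−2)), there exists a d-regular bipartite simple graph G such that χ'_t(G) ≥ d^t/(e · t · 2^{t−1}), where e is Euler's number. -/
/-- The `t`-th power of a simple graph `G`: two distinct vertices are adjacent iff
there is a path with at most `t` edges between them in `G`. -/
def SimpleGraph.power {V : Type*} (G : SimpleGraph V) (t : ℕ) : SimpleGraph V where
  Adj u v := u ≠ v ∧ ∃ p : G.Walk u v, p.IsPath ∧ p.length ≤ t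
  symm := by
    constructor
    rintro u v ⟨h, p, hp, hl⟩
    exact ⟨h.symm, p.reverse, hp.reverse, by simpa using hl⟩
  loopless := by constructor; rintro v ⟨h, -⟩; exact h rfl

/-- The distance-`t` chromatic number `χ_t(G)`. -/
noncomputable def distChromNum {V : Type*} (G : SimpleGraph V) (t : ℕ) : ℕ∞ :=
  (G.power t).chromaticNumber

/-- The distance-`t` chromatic index `χ'_t(G)`. -/
noncomputable def distChromIndex {V : Type*} (G : SimpleGraph V) (t : ℕ) : ℕ∞ :=
  ((G.lineGraph).power t).chromaticNumber

/-- `G` contains no cycle of length `ℓ` as a subgraph. -/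
def CycleFree {V : Type*} (G : SimpleGraph V) (ℓ : ℕ) : Prop :=
  ∀ (v : V) (p : G.Walk v v), p.IsCycle → p.length ≠ ℓ

/-- `G` is bipartite: the vertex set can be partitioned into two independent sets. -/
def BipartiteGraph {V : Type*} (G : SimpleGraph V) : Prop :=
  ∃ s : Set V, ∀ u v : V, G.Adj u v → (u ∈ s ↔ v ∉ s)



namespace DB

variable {k σ : ℕ}

abbrev W (k σ : ℕ) := Fin k → Fin σ

abbrev V (k σ : ℕ) := Bool × Bool × W k σ

def shl (x : W k σ) (a : Fin σ) : W k σ :=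
  fun i => if h : i.val + 1 < k then x ⟨i.val + 1, h⟩ else a

def shr (x : W k σ) (a : Fin σ) : W k σ :=
  fun i => if i.val = 0 then a else x ⟨i.val - 1, by omega⟩

lemma shr_shl (hk : 0 < k) (y : W k σ) (a : Fin σ) :
    shr (shl y a) (y ⟨0, hk⟩) = y := by
  funext i
  simp only [shr, shl]
  split_ifs with h1 h2
  · congr 1
    exact Fin.ext (by simp [h1])
  · congr 1
    exact Fin.ext (by simp; omega)
  · exfalso
    simp at h2
    omega

lemma shl_shr (hk : 0 < k) (y : W k σ) (a : Fin σ) :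
    shl (shr y a) (y ⟨k - 1, by omega⟩) = y := by
  funext i
  simp only [shl, shr]
  split_ifs with h1 h2
  · exfalso
    simp at h2
  · congr 1 <;> exact Fin.ext (by simp; omega)
  · congr 1 <;> exact Fin.ext (by simp; omega)

def step (u v : V k σ) : Prop :=
  u.1 = false ∧ v.1 = true ∧
    ((v.2.1 = u.2.1 ∧ ∃ a, v.2.2 = shl u.2.2 a) ∨
     (v.2.1 = !u.2.1 ∧ ∃ a, v.2.2 = shr u.2.2 a))

def G (k σ : ℕ) : SimpleGraph (V k σ) where
  Adj u v := step u v ∨ step v u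
  symm := by
    constructor
    rintro u v (h | h)
    · exact Or.inr h
    · exact Or.inl h
  loopless := by constructor; rintro v (⟨h1, h2, -⟩ | ⟨h1, h2, -⟩) <;> simp [h1] at h2

def fwd (u : V k σ) (a : Fin σ) : V k σ := (!u.1, xor u.1 u.2.1, shl u.2.2 a)

def bwd (u : V k σ) (a : Fin σ) : V k σ := (!u.1, xor (!u.1) u.2.1, shr u.2.2 a)

lemma adj_fwd (hk : 0 < k) (u : V k σ) (a : Fin σ) : (G k σ).Adj u (fwd u a) := by
  obtain ⟨s, p, x⟩ := u
  cases s
  · exact Or.inl ⟨rfl, rfl, Or.inl ⟨by simp [fwd], a, rfl⟩⟩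
  · refine Or.inr ⟨rfl, rfl, Or.inr ⟨by simp [fwd], x ⟨0, hk⟩, ?_⟩⟩
    exact (shr_shl hk x a).symm

lemma adj_bwd (hk : 0 < k) (u : V k σ) (a : Fin σ) : (G k σ).Adj u (bwd u a) := by
  obtain ⟨s, p, x⟩ := u
  cases s
  · exact Or.inl ⟨rfl, rfl, Or.inr ⟨by simp [bwd], a, rfl⟩⟩
  · refine Or.inr ⟨rfl, rfl, Or.inl ⟨by simp [bwd], x ⟨k - 1, by omega⟩, ?_⟩⟩
    exact (shl_shr hk x a).symm


/-- iterated forward steps -/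
def fwdIter (u : V k σ) (c : ℕ → Fin σ) : ℕ → V k σ
  | 0 => u
  | j + 1 => fwd (fwdIter u c j) (c j)

def bwdIter (u : V k σ) (c : ℕ → Fin σ) : ℕ → V k σ
  | 0 => u
  | j + 1 => bwd (bwdIter u c j) (c j)

def fwdWalk (hk : 0 < k) (u : V k σ) (c : ℕ → Fin σ) :
    (j : ℕ) → (G k σ).Walk u (fwdIter u c j)
  | 0 => SimpleGraph.Walk.nil
  | j + 1 => (fwdWalk hk u c j).concat (adj_fwd hk _ (c j))

def bwdWalk (hk : 0 < k) (u : V k σ) (c : ℕ → Fin σ) :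
    (j : ℕ) → (G k σ).Walk u (bwdIter u c j)
  | 0 => SimpleGraph.Walk.nil
  | j + 1 => (bwdWalk hk u c j).concat (adj_bwd hk _ (c j))

lemma fwdWalk_length (hk : 0 < k) (u : V k σ) (c : ℕ → Fin σ) (j : ℕ) :
    (fwdWalk hk u c j).length = j := by
  induction j with
  | zero => rfl
  | succ j ih => simp only [fwdWalk]; exact (SimpleGraph.Walk.length_concat _ _).trans (congrArg (· + 1) ih)

lemma bwdWalk_length (hk : 0 < k) (u : V k σ) (c : ℕ → Fin σ) (j : ℕ) :
    (bwdWalk hk u c j).length = j := by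
  induction j with
  | zero => rfl
  | succ j ih => simp only [bwdWalk]; exact (SimpleGraph.Walk.length_concat _ _).trans (congrArg (· + 1) ih)

lemma fwdIter_side (u : V k σ) (c : ℕ → Fin σ) (j : ℕ) :
    (fwdIter u c j).1 = xor (Nat.bodd j) u.1 := by
  induction j with
  | zero => simp [fwdIter]
  | succ j ih =>
    simp only [fwdIter, fwd, Nat.bodd_succ, ih]
    cases Nat.bodd j <;> cases u.1 <;> rfl

lemma bwdIter_side (u : V k σ) (c : ℕ → Fin σ) (j : ℕ) :
    (bwdIter u c j).1 = xor (Nat.bodd j) u.1 := by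
  induction j with
  | zero => simp [bwdIter]
  | succ j ih =>
    simp only [bwdIter, bwd, Nat.bodd_succ, ih]
    cases Nat.bodd j <;> cases u.1 <;> rfl

/-- flag change after j forward steps, starting from side s -/
def fflag (s : Bool) : ℕ → Bool
  | 0 => false
  | j + 1 => xor (xor (Nat.bodd j) s) (fflag s j)

/-- flag change after j backward steps -/
def bflag (s : Bool) : ℕ → Bool
  | 0 => false
  | j + 1 => xor (!(xor (Nat.bodd j) s)) (bflag s j)

lemma fwdIter_flag (u : V k σ) (c : ℕ → Fin σ) (j : ℕ) :
    (fwdIter u c j).2.1 = xor (fflag u.1 j) u.2.1 := by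
  induction j with
  | zero => simp [fwdIter, fflag]
  | succ j ih =>
    simp only [fwdIter, fwd, fflag, fwdIter_side, ih, Bool.xor_assoc]

lemma bwdIter_flag (u : V k σ) (c : ℕ → Fin σ) (j : ℕ) :
    (bwdIter u c j).2.1 = xor (bflag u.1 j) u.2.1 := by
  induction j with
  | zero => simp [bwdIter, bflag]
  | succ j ih =>
    simp only [bwdIter, bwd, bflag, bwdIter_side, ih, Bool.xor_assoc]

lemma fflag_ne_bflag (s : Bool) (j : ℕ) (hj : Nat.bodd j = true) :
    fflag s j ≠ bflag s j := by
  have key : ∀ m, xor (fflag s m) (bflag s m) = Nat.bodd m := by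
    intro m
    induction m with
    | zero => rfl
    | succ m ih =>
      simp only [fflag, bflag, Nat.bodd_succ]
      revert ih
      cases Nat.bodd m <;> cases fflag s m <;> cases bflag s m <;>
        cases s <;> simp
  have h2 := key j
  rw [hj] at h2
  intro h
  rw [h, Bool.xor_self] at h2
  exact Bool.false_ne_true h2

lemma fwdIter_word (u : V k σ) (c : ℕ → Fin σ) (j : ℕ) (i : Fin k) :
    (fwdIter u c j).2.2 i =
      if h : i.val + j < k then u.2.2 ⟨i.val + j, h⟩ else c (i.val + j - k) := by
  induction j generalizing i with
  | zero => simp [fwdIter]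
  | succ j ih =>
    show (fwd (fwdIter u c j) (c j)).2.2 i = _
    simp only [fwd, shl]
    by_cases h1 : i.val + 1 < k
    · rw [dif_pos h1, ih ⟨i.val + 1, h1⟩]
      have hd : (⟨i.val + 1, h1⟩ : Fin k).val = i.val + 1 := rfl
      split_ifs with h2 h3 h3
      · exact congrArg u.2.2 (Fin.ext (show i.val + 1 + j = i.val + (j + 1) by omega))
      · omega
      · omega
      · exact congrArg c (show i.val + 1 + j - k = i.val + (j + 1) - k by omega)
    · rw [dif_neg h1, dif_neg (by omega)]
      congr 1
      omega

lemma bwdIter_word (u : V k σ) (c : ℕ → Fin σ) (j : ℕ) (i : Fin k) :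
    (bwdIter u c j).2.2 i =
      if h : j ≤ i.val then u.2.2 ⟨i.val - j, by omega⟩ else c (j - 1 - i.val) := by
  induction j generalizing i with
  | zero => simp [bwdIter]
  | succ j ih =>
    show (bwd (bwdIter u c j) (c j)).2.2 i = _
    simp only [bwd, shr]
    by_cases h1 : i.val = 0
    · rw [if_pos h1, dif_neg (by omega)]
      congr 1
      omega
    · have hlt : i.val - 1 < k := by omega
      rw [if_neg h1, ih ⟨i.val - 1, hlt⟩]
      have hd : (⟨i.val - 1, hlt⟩ : Fin k).val = i.val - 1 := rfl
      split_ifs with h2 h3 h3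
      · exact congrArg u.2.2 (Fin.ext (show i.val - 1 - j = i.val - (j + 1) by omega))
      · omega
      · omega
      · exact congrArg c (show j - 1 - (i.val - 1) = j + 1 - 1 - i.val by omega)

lemma reach (hk : Nat.bodd k = true) (hk0 : 0 < k) (u v : V k σ) (hs : u.1 ≠ v.1) :
    ∃ w : (G k σ).Walk u v, w.length = k := by
  by_cases hf : v.2.1 = xor (fflag u.1 k) u.2.1
  · set c : ℕ → Fin σ := fun n => if h : n < k then v.2.2 ⟨n, h⟩ else v.2.2 ⟨0, hk0⟩ with hc
    have he : fwdIter u c k = v := by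
      have h1 : (fwdIter u c k).1 = v.1 := by
        rw [fwdIter_side, hk]
        cases hu : u.1 <;> cases hv : v.1 <;> simp_all
      have h2 : (fwdIter u c k).2.1 = v.2.1 := by rw [fwdIter_flag, hf]
      have h3 : (fwdIter u c k).2.2 = v.2.2 := by
        funext i
        rw [fwdIter_word, dif_neg (by omega)]
        have harg : i.val + k - k = i.val := by omega
        rw [harg, hc]
        simp only []
        rw [dif_pos i.isLt]
      exact Prod.ext h1 (Prod.ext h2 h3)
    exact ⟨(fwdWalk hk0 u c k).copy rfl he, by simp [fwdWalk_length]⟩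
  · have hf' : v.2.1 = xor (bflag u.1 k) u.2.1 := by
      have hne := fflag_ne_bflag u.1 k hk
      cases hb : bflag u.1 k <;> cases hff : fflag u.1 k <;>
        cases hu2 : u.2.1 <;> cases hv2 : v.2.1 <;> simp_all
    set c : ℕ → Fin σ := fun n => v.2.2 ⟨k - 1 - n, by omega⟩ with hc
    have he : bwdIter u c k = v := by
      have h1 : (bwdIter u c k).1 = v.1 := by
        rw [bwdIter_side, hk]
        cases hu : u.1 <;> cases hv : v.1 <;> simp_all
      have h2 : (bwdIter u c k).2.1 = v.2.1 := by rw [bwdIter_flag, hf']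
      have h3 : (bwdIter u c k).2.2 = v.2.2 := by
        funext i
        rw [bwdIter_word, dif_neg (by omega)]
        rw [hc]
        simp only []
        exact congrArg v.2.2 (Fin.ext (by simp only [Fin.val_mk]; omega))
      exact Prod.ext h1 (Prod.ext h2 h3)
    exact ⟨(bwdWalk hk0 u c k).copy rfl he, by simp [bwdWalk_length]⟩

lemma neighborSet_eq (hk0 : 0 < k) (u : V k σ) :
    (G k σ).neighborSet u = Set.range (fwd u) ∪ Set.range (bwd u) := by
  ext v
  constructor
  · rintro (⟨h1, h2, (⟨h3, a, h4⟩ | ⟨h3, a, h4⟩)⟩ | ⟨h1, h2, (⟨h3, a, h4⟩ | ⟨h3, a, h4⟩)⟩)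
    · -- step u v, F : v = fwd u a
      left
      refine ⟨a, ?_⟩
      obtain ⟨s, p, x⟩ := u
      obtain ⟨s', p', y⟩ := v
      simp only at h1 h2 h3 h4
      subst h1; subst h2
      simp [fwd, h3, h4]
    · -- step u v, B : v = bwd u a
      right
      refine ⟨a, ?_⟩
      obtain ⟨s, p, x⟩ := u
      obtain ⟨s', p', y⟩ := v
      simp only at h1 h2 h3 h4
      subst h1; subst h2
      simp [bwd, h3, h4]
    · -- step v u, F : u.2.2 = shl v.2.2 a, so v = bwd u (v.2.2 0)
      right
      refine ⟨v.2.2 ⟨0, hk0⟩, ?_⟩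
      obtain ⟨s, p, x⟩ := u
      obtain ⟨s', p', y⟩ := v
      simp only at h1 h2 h3 h4
      subst h1; subst h2
      refine Prod.ext rfl (Prod.ext (by simp [bwd, h3]) ?_)
      show shr x (y ⟨0, hk0⟩) = y
      rw [h4]
      exact shr_shl hk0 y a
    · -- step v u, B : u.2.2 = shr v.2.2 a, so v = fwd u (v.2.2 (k-1))
      left
      refine ⟨v.2.2 ⟨k - 1, by omega⟩, ?_⟩
      obtain ⟨s, p, x⟩ := u
      obtain ⟨s', p', y⟩ := v
      simp only at h1 h2 h3 h4
      subst h1; subst h2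
      refine Prod.ext rfl (Prod.ext (by simp [fwd]; cases p' <;> simp_all) ?_)
      show shl x (y ⟨k - 1, by omega⟩) = y
      rw [h4]
      exact shl_shr hk0 y a
  · rintro (⟨a, rfl⟩ | ⟨a, rfl⟩)
    · exact adj_fwd hk0 u a
    · exact adj_bwd hk0 u a

lemma fwd_injective (hk0 : 0 < k) (u : V k σ) : Function.Injective (fwd u) := by
  intro a b h
  have h2 := congrArg (fun v : V k σ => v.2.2 ⟨k - 1, by omega⟩) h
  simp only [fwd, shl, Fin.val_mk] at h2
  rwa [dif_neg (by omega), dif_neg (by omega)] at h2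

lemma bwd_injective (hk0 : 0 < k) (u : V k σ) : Function.Injective (bwd u) := by
  intro a b h
  have h2 := congrArg (fun v : V k σ => v.2.2 ⟨0, hk0⟩) h
  simp only [bwd, shr, Fin.val_mk] at h2
  simpa using h2

lemma ncard_neighborSet (hk0 : 0 < k) (u : V k σ) :
    ((G k σ).neighborSet u).ncard = σ + σ := by
  rw [neighborSet_eq hk0 u]
  rw [Set.ncard_union_eq ?disj (Set.toFinite _) (Set.toFinite _)]
  case disj =>
    rw [Set.disjoint_left]
    rintro v ⟨a, rfl⟩ ⟨b, hb⟩
    have := congrArg (fun w : V k σ => w.2.1) hb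
    simp only [fwd, bwd] at this
    cases hu : u.1 <;> cases hp : u.2.1 <;> simp_all
  rw [← Set.image_univ, ← Set.image_univ,
    Set.ncard_image_of_injective _ (fwd_injective hk0 u),
    Set.ncard_image_of_injective _ (bwd_injective hk0 u),
    Set.ncard_univ]
  simp


lemma adj_sides {u v : V k σ} (h : (G k σ).Adj u v) : u.1 ≠ v.1 := by
  rcases h with ⟨h1, h2, -⟩ | ⟨h1, h2, -⟩ <;> simp [h1, h2]

end DB

open SimpleGraph in
lemma lineWalk {α : Type*} {H : SimpleGraph α} {u v : α} (w : H.Walk u v) :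
    ∀ (e f : H.edgeSet), u ∈ (e : Sym2 α) → v ∈ (f : Sym2 α) → e ≠ f →
    ∃ w' : H.lineGraph.Walk e f, w'.length ≤ w.length + 1 := by
  induction w with
  | nil =>
    intro e f hu hv hne
    exact ⟨.cons (lineGraph_adj_iff_exists.mpr ⟨hne, _, hu, hv⟩) .nil, by simp⟩
  | @cons a b c hadj w ih =>
    intro e f hu hv hne
    have hE : (s(a, b) : Sym2 α) ∈ H.edgeSet := hadj
    set E : H.edgeSet := ⟨s(a, b), hE⟩ with hEdef
    by_cases hEe : E = e
    · have hb : b ∈ (e : Sym2 α) := by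
        rw [← hEe]
        exact Sym2.mem_mk_right a b
      obtain ⟨w', hw'⟩ := ih e f hb hv hne
      exact ⟨w', by simp only [SimpleGraph.Walk.length_cons]; omega⟩
    · have hadj_eE : H.lineGraph.Adj e E :=
        lineGraph_adj_iff_exists.mpr ⟨fun hh => hEe hh.symm, a, hu, Sym2.mem_mk_left a b⟩
      by_cases hEf : E = f
      · exact ⟨.cons (hEf ▸ hadj_eE) .nil, by simp⟩
      · obtain ⟨w', hw'⟩ := ih E f (Sym2.mem_mk_right a b) hv hEf
        exact ⟨.cons hadj_eE w', by simp only [SimpleGraph.Walk.length_cons]; omega⟩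

open SimpleGraph in
lemma exists_rep {α : Type*} {H : SimpleGraph α} (e : H.edgeSet) :
    ∃ a b, H.Adj a b ∧ (e : Sym2 α) = s(a, b) := by
  obtain ⟨e1, he⟩ := e
  induction e1 with
  | _ a b => exact ⟨a, b, he, rfl⟩

open SimpleGraph in
lemma DB.power_eq_top {k σ : ℕ} (hk : Nat.bodd k = true) (hk0 : 0 < k) (t : ℕ)
    (ht : k + 1 ≤ t) : ((DB.G k σ).lineGraph).power t = ⊤ := by
  ext e f
  simp only [SimpleGraph.power, top_adj]
  constructor
  · rintro ⟨h, -⟩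
    exact h
  · intro hne
    refine ⟨hne, ?_⟩
    obtain ⟨a, b, hab, hee⟩ := exists_rep e
    obtain ⟨p, q, hpq, hff⟩ := exists_rep f
    have hab' := DB.adj_sides hab
    have hpq' := DB.adj_sides hpq
    -- choose endpoint of f with side different from a
    obtain ⟨v, hvf, hv⟩ : ∃ v : DB.V k σ, v ∈ (f : Sym2 (DB.V k σ)) ∧ a.1 ≠ v.1 := by
      by_cases hap : a.1 = p.1
      · exact ⟨q, hff ▸ Sym2.mem_mk_right p q, by rw [hap]; exact hpq'⟩
      · exact ⟨p, hff ▸ Sym2.mem_mk_left p q, hap⟩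
    obtain ⟨w, hw⟩ := DB.reach hk hk0 a v hv
    obtain ⟨w', hw'⟩ := lineWalk w e f (hee ▸ Sym2.mem_mk_left a b) hvf hne
    exact ⟨w'.bypass, w'.bypass_isPath, le_trans w'.length_bypass_le (by omega)⟩

/-- Proposition 9: for fixed even `t ≥ 4` and every `d ≥ 2` divisible by `2(t-2)`,
there is a `d`-regular bipartite graph `G` with `χ'_t(G) ≥ d^t / (e t 2^{t-1})`. -/
theorem bipartite_regular_graph_large_distance_chromatic_index
    (t : ℕ) (ht : 4 ≤ t) (htEven : Even t) (d : ℕ) (hd : 2 ≤ d)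
    (hdvd : 2 * (t - 2) ∣ d) :
    ∃ (V : Type) (_ : Fintype V) (G : SimpleGraph V),
      (∀ v : V, (G.neighborSet v).ncard = d) ∧ BipartiteGraph G ∧
      (d : ℝ) ^ t / (Real.exp 1 * t * 2 ^ (t - 1)) ≤ ((distChromIndex G t).toNat : ℝ) := by
  classical
  set k := t - 1 with hkdef
  set σ := d / 2 with hσdef
  have hk0 : 0 < k := by omega
  have ht2 : t % 2 = 0 := Nat.even_iff.mp htEven
  have hkodd : Nat.bodd k = true := by
    have h1 : k % 2 = 1 := by omega
    have h2 := Nat.mod_two_of_bodd k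
    cases h : Nat.bodd k
    · rw [h] at h2; simp at h2; omega
    · rfl
  have hdeven : 2 ∣ d := (dvd_mul_right 2 (t - 2)).trans hdvd
  have hσ2 : σ + σ = d := by omega
  refine ⟨DB.V k σ, inferInstance, DB.G k σ, ?_, ?_, ?_⟩
  · intro v
    rw [DB.ncard_neighborSet hk0]
    exact hσ2
  · refine ⟨{v | v.1 = false}, ?_⟩
    intro u v h
    rcases h with ⟨h1, h2, -⟩ | ⟨h1, h2, -⟩ <;> simp [h1, h2, Set.mem_setOf_eq]
  · have htop : ((DB.G k σ).lineGraph).power t = ⊤ :=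
      DB.power_eq_top hkodd hk0 t (by omega)
    rw [distChromIndex, htop, SimpleGraph.chromaticNumber_top]
    rw [ENat.toNat_coe]
    -- counting
    set G := DB.G k σ with hG
    have hdeg : ∀ v, G.degree v = d := by
      intro v
      rw [SimpleGraph.degree, SimpleGraph.neighborFinset_def, ← Set.ncard_eq_toFinset_card']
      show ((DB.G k σ).neighborSet v).ncard = d
      rw [DB.ncard_neighborSet hk0]
      exact hσ2
    have hhand := G.sum_degrees_eq_twice_card_edges
    rw [Finset.sum_congr rfl (fun v _ => hdeg v), Finset.sum_const, smul_eq_mul] at hhand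
    have hcardV : Fintype.card (DB.V k σ) = 4 * σ ^ k := by
      simp [DB.V, Fintype.card_prod, Fintype.card_fun]
      ring
    rw [Finset.card_univ, hcardV, SimpleGraph.edgeFinset_card] at hhand
    -- hhand : 4 * σ ^ k * d = 2 * Fintype.card G.edgeSet
    set N := Fintype.card G.edgeSet with hN
    have hNval : 2 * N = 4 * σ ^ k * d := hhand.symm
    -- real arithmetic
    have hcast := congrArg (Nat.cast : ℕ → ℝ) hNval
    push_cast at hcast
    -- hcast : 2 * N = 4 * σ^k * d  (in ℝ)
    have hσr : (σ:ℝ) * 2 = d := by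
      have : σ * 2 = d := by omega
      exact_mod_cast this
    have hdk : (σ:ℝ)^k * 2^k = (d:ℝ)^k := by
      rw [← mul_pow, hσr]
    have hexp : (1:ℝ) ≤ Real.exp 1 := Real.one_le_exp (by norm_num)
    have hNr' : (N:ℝ) = 2 * (σ:ℝ)^k * d := by linarith
    have htk : t = k + 1 := by omega
    rw [htk]
    push_cast
    have hpos : (0:ℝ) < Real.exp 1 * (k + 1 : ℝ) * 2 ^ k := by positivity
    rw [div_le_iff₀ hpos]
    have hX : (0:ℝ) ≤ (σ:ℝ)^k * 2^k * d := by positivity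
    have hk1 : (1:ℝ) ≤ (k:ℝ) + 1 := by
      have : (0:ℝ) ≤ (k:ℝ) := Nat.cast_nonneg k
      linarith
    calc (d:ℝ)^(k+1) = ((σ:ℝ)^k * 2^k) * d := by rw [hdk, pow_succ]
      _ ≤ (Real.exp 1 * ((k:ℝ)+1)) * (2 * ((σ:ℝ)^k * 2^k * d)) := by
          nlinarith [mul_le_mul hexp hk1 (by norm_num : (0:ℝ) ≤ 1) (le_trans (by norm_num) hexp)]
      _ = (N:ℝ) * (Real.exp 1 * ((k:ℝ)+1) * 2^k) := by rw [hNr']; ring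
end

section
/- Fix an integer t ≥ 2. For every integer d ≥ 2 with d ≡ 1 (mod t−1), there exists a d-regular bipartite simple graph G whose number of edges is exactly d · ((d−1)/(t−1) + 1)^{t−1} and such that χ'_t(G) equals the number of edges of G; equivalently, (L(G))^t is a complete graph. -/
open Finset Function SimpleGraph Sum

section Construction

variable {n q : ℕ}

/-- The vertex type: two copies of `Fin n → Fin q`. -/
abbrev Vtx (n q : ℕ) : Type := (Fin n → Fin q) ⊕ (Fin n → Fin q)

/-- The bipartite Hamming-ball graph. -/
def Gr (n q : ℕ) : SimpleGraph (Vtx n q) where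
  Adj u v := match u, v with
    | .inl a, .inr b => hammingDist a b ≤ 1
    | .inr b, .inl a => hammingDist a b ≤ 1
    | _, _ => False
  symm := by constructor; rintro (a|a) (b|b) h <;> exact h
  loopless := by constructor; rintro (a|a) h <;> exact h

@[simp] lemma gr_adj_lr {a b : Fin n → Fin q} :
    (Gr n q).Adj (inl a) (inr b) ↔ hammingDist a b ≤ 1 := Iff.rfl

@[simp] lemma gr_adj_rl {a b : Fin n → Fin q} :
    (Gr n q).Adj (inr b) (inl a) ↔ hammingDist a b ≤ 1 := Iff.rfl

@[simp] lemma gr_adj_ll {a b : Fin n → Fin q} : ¬ (Gr n q).Adj (inl a) (inl b) := id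

@[simp] lemma gr_adj_rr {a b : Fin n → Fin q} : ¬ (Gr n q).Adj (inr a) (inr b) := id

/-- Swapping the two sides is an automorphism. -/
def grSwap (n q : ℕ) : Gr n q ≃g Gr n q where
  toEquiv := Equiv.sumComm _ _
  map_rel_iff' := by
    rintro (a|a) (b|b) <;>
      simp only [Equiv.sumComm_apply, Sum.swap_inl, Sum.swap_inr, gr_adj_lr, gr_adj_rl,
        gr_adj_ll, gr_adj_rr] <;>
      rw [hammingDist_comm]

lemma hd_update_le (a : Fin n → Fin q) (i : Fin n) (x : Fin q) :
    hammingDist a (update a i x) ≤ 1 := by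
  rw [hammingDist]
  calc ({j | a j ≠ update a i x j} : Finset (Fin n)).card ≤ ({i} : Finset (Fin n)).card := by
        apply Finset.card_le_card
        intro j hj
        simp only [mem_filter, mem_univ, true_and] at hj
        simp only [mem_singleton]
        by_contra hji
        exact hj (by rw [update_of_ne hji])
    _ = 1 := Finset.card_singleton i

lemma hd_update_eq (a b : Fin n → Fin q) (i : Fin n) (h : a i ≠ b i) :
    hammingDist (update a i (b i)) b = hammingDist a b - 1 := by
  rw [hammingDist, hammingDist]
  have hset : ({j | update a i (b i) j ≠ b j} : Finset (Fin n))
      = ({j | a j ≠ b j} : Finset (Fin n)).erase i := by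
    ext j
    by_cases hji : j = i
    · subst hji
      simp [update_self]
    · simp [mem_erase, hji, update_of_ne hji]
  rw [hset, Finset.card_erase_of_mem (by simp [h])]

lemma grWalks (k : ℕ) : ∀ a b : Fin n → Fin q, hammingDist a b = k →
    (Even k → ∃ w : (Gr n q).Walk (inl a) (inl b), w.length = k) ∧
    (Odd k → ∃ w : (Gr n q).Walk (inl a) (inr b), w.length = k) := by
  induction k using Nat.strong_induction_on with
  | _ k ih =>
    intro a b hab
    rcases Nat.eq_zero_or_pos k with rfl | hk
    · have hab' : a = b := hammingDist_eq_zero.mp hab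
      subst hab'
      exact ⟨fun _ => ⟨Walk.nil, rfl⟩, fun h => absurd h (by simp)⟩
    · have hne : a ≠ b := by
        rw [← hammingDist_ne_zero]; omega
      obtain ⟨i, hi⟩ : ∃ i, a i ≠ b i := by
        by_contra hcon; push_neg at hcon; exact hne (funext hcon)
      have h₂ : hammingDist (update a i (b i)) b = k - 1 := by
        rw [hd_update_eq a b i hi, hab]
      have hadj : (Gr n q).Adj (inl a) (inr (update a i (b i))) :=
        hd_update_le a i (b i)
      constructor
      · intro hkeven
        have hodd : Odd (k - 1) := by
          obtain ⟨m, hm⟩ := hkeven; exact ⟨m - 1, by omega⟩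
        obtain ⟨w', hw'⟩ := (ih (k - 1) (by omega) b (update a i (b i))
          (by rw [hammingDist_comm]; exact h₂)).2 hodd
        exact ⟨Walk.cons hadj w'.reverse, by
          simp only [Walk.length_cons, Walk.length_reverse, hw']; omega⟩
      · intro hkodd
        have heven : Even (k - 1) := by
          obtain ⟨m, hm⟩ := hkodd; exact ⟨m, by omega⟩
        obtain ⟨w', hw'⟩ := (ih (k - 1) (by omega) (update a i (b i)) b h₂).1 heven
        refine ⟨Walk.cons hadj (w'.map (grSwap n q).toHom), ?_⟩
        have hl : (Walk.cons hadj (w'.map (grSwap n q).toHom)).length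
            = (w'.map (grSwap n q).toHom).length + 1 := rfl
        have h2 := Walk.length_map (grSwap n q).toHom w'
        exact (hl.trans (congrArg Nat.succ (h2.trans hw'))).trans (by omega)

lemma same_walk (a b : Fin n → Fin q) :
    ∃ w : (Gr n q).Walk (inl a) (inl b), w.length ≤ hammingDist a b + 1 := by
  rcases Nat.even_or_odd (hammingDist a b) with he | ho
  · obtain ⟨w, hw⟩ := (grWalks _ a b rfl).1 he
    exact ⟨w, by omega⟩
  · obtain ⟨w, hw⟩ := (grWalks (hammingDist a b) b a (by rw [hammingDist_comm])).2
      ho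
    have hadj : (Gr n q).Adj (inl a) (inr a) := by simp
    exact ⟨Walk.cons hadj w.reverse, by
      simp only [Walk.length_cons, Walk.length_reverse, hw]; omega⟩

lemma cross_walk (a b : Fin n → Fin q) :
    ∃ w : (Gr n q).Walk (inl a) (inr b), w.length ≤ hammingDist a b + 1 := by
  rcases Nat.even_or_odd (hammingDist a b) with he | ho
  · obtain ⟨w, hw⟩ := (grWalks _ a b rfl).1 he
    have hadj : (Gr n q).Adj (inl a) (inr a) := by simp
    refine ⟨Walk.cons hadj (w.map (grSwap n q).toHom : (Gr n q).Walk (inr a) (inr b)), ?_⟩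
    have hl : (Walk.cons hadj (w.map (grSwap n q).toHom : (Gr n q).Walk (inr a) (inr b))).length
        = (w.map (grSwap n q).toHom).length + 1 := rfl
    have h2 := Walk.length_map (grSwap n q).toHom w
    exact (hl.trans (congrArg Nat.succ (h2.trans hw))).le.trans (by omega)
  · obtain ⟨w, hw⟩ := (grWalks _ a b rfl).2 ho
    exact ⟨w, by omega⟩


lemma line_lift {V' : Type} {G : SimpleGraph V'} {x y : V'} (w : G.Walk x y) :
    ∀ e f : G.edgeSet, x ∈ (e : Sym2 V') → y ∈ (f : Sym2 V') →
    ∃ W : (G.lineGraph).Walk e f, W.length ≤ w.length + 1 := by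
  induction w with
  | nil =>
    intro e f hx hy
    by_cases hef : e = f
    · subst hef; exact ⟨Walk.nil, by simp⟩
    · exact ⟨Walk.cons (lineGraph_adj_iff_exists.mpr ⟨hef, _, hx, hy⟩) Walk.nil, by simp⟩
  | @cons u v y hadj w' ih =>
    intro e f hx hy
    obtain ⟨W', hW'⟩ := ih ⟨s(u, v), hadj⟩ f (Sym2.mem_mk_right u v) hy
    by_cases heg : e = (⟨s(u, v), hadj⟩ : G.edgeSet)
    · subst heg
      exact ⟨W', by simp only [Walk.length_cons]; omega⟩
    · refine ⟨Walk.cons (lineGraph_adj_iff_exists.mpr ⟨heg, u, hx, Sym2.mem_mk_left u v⟩) W', ?_⟩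
      simp only [Walk.length_cons]
      omega

lemma edge_form (e : (Gr n q).edgeSet) :
    ∃ a b, hammingDist a b ≤ 1 ∧ (e : Sym2 (Vtx n q)) = s(inl a, inr b) := by
  obtain ⟨e, he⟩ := e
  induction e with
  | _ u v =>
    rcases u with a | a <;> rcases v with b | b
    · exact absurd he (by simp)
    · exact ⟨a, b, he, rfl⟩
    · exact ⟨b, a, he, Sym2.eq_swap⟩
    · exact absurd he (by simp)

lemma line_diam (e f : (Gr n q).edgeSet) :
    ∃ W : ((Gr n q).lineGraph).Walk e f, W.length ≤ n + 1 := by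
  obtain ⟨a, b, hab, he⟩ := edge_form e
  obtain ⟨a', b', hab', hf⟩ := edge_form f
  have hae : (inl a : Vtx n q) ∈ (e : Sym2 (Vtx n q)) := by rw [he]; exact Sym2.mem_mk_left _ _
  have haf : (inl a' : Vtx n q) ∈ (f : Sym2 (Vtx n q)) := by rw [hf]; exact Sym2.mem_mk_left _ _
  have hbf : (inr b' : Vtx n q) ∈ (f : Sym2 (Vtx n q)) := by rw [hf]; exact Sym2.mem_mk_right _ _
  have hn : hammingDist a a' ≤ n := le_trans hammingDist_le_card_fintype (by simp)
  rcases lt_or_eq_of_le hn with hlt | heq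
  · obtain ⟨w, hw⟩ := same_walk (q := q) a a'
    obtain ⟨W, hW⟩ := line_lift w e f hae haf
    exact ⟨W, by omega⟩
  · rcases Nat.even_or_odd n with hev | hod
    · obtain ⟨w, hw⟩ := (grWalks (q := q) n a a' heq).1 hev
      obtain ⟨W, hW⟩ := line_lift w e f hae haf
      exact ⟨W, by omega⟩
    · have htri : hammingDist a a' ≤ hammingDist a b' + hammingDist b' a' :=
        hammingDist_triangle a b' a'
      have hba' : hammingDist b' a' ≤ 1 := by rwa [hammingDist_comm]
      have hb'n : hammingDist a b' ≤ n := le_trans hammingDist_le_card_fintype (by simp)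
      by_cases hcase : hammingDist a b' = n
      · obtain ⟨w, hw⟩ := (grWalks (q := q) n a b' hcase).2 hod
        obtain ⟨W, hW⟩ := line_lift w e f hae hbf
        exact ⟨W, by omega⟩
      · obtain ⟨w, hw⟩ := cross_walk (q := q) a b'
        obtain ⟨W, hW⟩ := line_lift w e f hae hbf
        exact ⟨W, by omega⟩

lemma power_eq_top {V' : Type} {H : SimpleGraph V'} {t : ℕ}
    (h : ∀ e f : V', ∃ w : H.Walk e f, w.length ≤ t) : H.power t = ⊤ := by
  classical
  ext u v
  simp only [SimpleGraph.power, top_adj]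
  constructor
  · rintro ⟨hne, -⟩; exact hne
  · intro hne
    obtain ⟨w, hw⟩ := h u v
    exact ⟨hne, w.bypass, w.bypass_isPath, le_trans (Walk.length_bypass_le w) hw⟩

lemma ball_card (c : Fin n → Fin q) :
    Nat.card {x : Fin n → Fin q // hammingDist c x ≤ 1} = 1 + n * (q - 1) := by
  classical
  let f : Option (Σ i : Fin n, {y : Fin q // y ≠ c i}) →
      {x : Fin n → Fin q // hammingDist c x ≤ 1} := fun o =>
    match o with
    | none => ⟨c, by simp⟩
    | some ⟨i, y, hy⟩ => ⟨update c i y, hd_update_le c i y⟩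
  have hbij : Function.Bijective f := by
    constructor
    · rintro (_ | ⟨i, y, hy⟩) (_ | ⟨j, z, hz⟩) h
      · rfl
      · exfalso
        have h' : c = update c j z := congrArg Subtype.val h
        have := congrFun h' j
        rw [update_self] at this
        exact hz this.symm
      · exfalso
        have h' : update c i y = c := congrArg Subtype.val h
        have := congrFun h' i
        rw [update_self] at this
        exact hy this
      · have h' : update c i y = update c j z := congrArg Subtype.val h
        by_cases hij : i = j
        · subst hij
          have := congrFun h' i
          rw [update_self, update_self] at this
          subst this
          rfl
        · exfalso
          have := congrFun h' i
          rw [update_self, update_of_ne (fun hc => hij hc)] at this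
          exact hy this
    · rintro ⟨x, hx⟩
      by_cases hxc : x = c
      · exact ⟨none, Subtype.ext hxc.symm⟩
      · obtain ⟨i, hi⟩ : ∃ i, x i ≠ c i := by
          by_contra hcon; push_neg at hcon; exact hxc (funext hcon)
        refine ⟨some ⟨i, x i, hi⟩, Subtype.ext ?_⟩
        show update c i (x i) = x
        funext j
        by_cases hji : j = i
        · subst hji; rw [update_self]
        · rw [update_of_ne hji]
          by_contra hcj
          have hsub : ({i, j} : Finset (Fin n)) ⊆ ({k | c k ≠ x k} : Finset (Fin n)) := by
            intro k hk
            simp only [Finset.mem_insert, Finset.mem_singleton] at hk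
            rcases hk with rfl | rfl
            · simp [Ne.symm hi]
            · simpa using hcj
          have h2 : 2 ≤ hammingDist c x := by
            rw [hammingDist]
            calc 2 = ({i, j} : Finset (Fin n)).card := (Finset.card_pair (Ne.symm hji)).symm
              _ ≤ _ := Finset.card_le_card hsub
          omega
  rw [← Nat.card_congr (Equiv.ofBijective f hbij), Nat.card_eq_fintype_card]
  have hfib : ∀ i : Fin n, Fintype.card {y : Fin q // y ≠ c i} = q - 1 := by
    intro i
    have h1 := Fintype.card_subtype_compl (fun y : Fin q => y = c i)
    simp only [Fintype.card_subtype_eq, Fintype.card_fin] at h1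
    convert h1 using 2
  simp only [Fintype.card_option, Fintype.card_sigma, hfib, Finset.sum_const,
    Finset.card_univ, Fintype.card_fin, smul_eq_mul]
  omega

lemma deg_inl (a : Fin n → Fin q) :
    ((Gr n q).neighborSet (inl a)).ncard = 1 + n * (q - 1) := by
  rw [← Nat.card_coe_set_eq, ← ball_card a]
  apply Nat.card_congr
  refine (Equiv.ofBijective
    (fun x : {x : Fin n → Fin q // hammingDist a x ≤ 1} =>
      (⟨inr x.1, x.2⟩ : ((Gr n q).neighborSet (inl a)))) ⟨?_, ?_⟩).symm
  · rintro ⟨x, hx⟩ ⟨y, hy⟩ h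
    have := congrArg Subtype.val h
    simp only [inr.injEq] at this
    exact Subtype.ext this
  · rintro ⟨(u | u), hu⟩
    · exact absurd hu (by simp)
    · exact ⟨⟨u, hu⟩, rfl⟩

lemma deg_inr (b : Fin n → Fin q) :
    ((Gr n q).neighborSet (inr b)).ncard = 1 + n * (q - 1) := by
  rw [← Nat.card_coe_set_eq, ← ball_card b]
  apply Nat.card_congr
  refine (Equiv.ofBijective
    (fun x : {x : Fin n → Fin q // hammingDist b x ≤ 1} =>
      (⟨inl x.1, by
        have hx := x.2
        rw [hammingDist_comm] at hx
        exact hx⟩ : ((Gr n q).neighborSet (inr b)))) ⟨?_, ?_⟩).symm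
  · rintro ⟨x, hx⟩ ⟨y, hy⟩ h
    have := congrArg Subtype.val h
    simp only [inl.injEq] at this
    exact Subtype.ext this
  · rintro ⟨(u | u), hu⟩
    · refine ⟨⟨u, ?_⟩, rfl⟩
      rw [hammingDist_comm]
      exact hu
    · exact absurd hu (by simp)

lemma edge_card : Nat.card (Gr n q).edgeSet = q ^ n * (1 + n * (q - 1)) := by
  classical
  have e2 : (Σ a : Fin n → Fin q, {b : Fin n → Fin q // hammingDist a b ≤ 1})
      ≃ (Gr n q).edgeSet := by
    refine Equiv.ofBijective (fun p => ⟨s(inl p.1, inr p.2.1), p.2.2⟩) ⟨?_, ?_⟩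
    · rintro ⟨a, b, hb⟩ ⟨a', b', hb'⟩ h
      have h' := congrArg Subtype.val h
      simp only [Sym2.eq_iff] at h'
      rcases h' with ⟨h1, h2⟩ | ⟨h1, h2⟩
      · obtain rfl : a = a' := inl_injective h1
        obtain rfl : b = b' := inr_injective h2
        rfl
      · exact absurd h1 (by simp)
    · rintro ⟨e, he⟩
      obtain ⟨a, b, hab, hef⟩ := edge_form ⟨e, he⟩
      exact ⟨⟨a, b, hab⟩, Subtype.ext hef.symm⟩
  rw [← Nat.card_congr e2, Nat.card_eq_fintype_card, Fintype.card_sigma]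
  have hfib : ∀ a : Fin n → Fin q,
      Fintype.card {b : Fin n → Fin q // hammingDist a b ≤ 1} = 1 + n * (q - 1) := fun a => by
    rw [← Nat.card_eq_fintype_card, ball_card]
  simp only [hfib, Finset.sum_const, Finset.card_univ, smul_eq_mul, Fintype.card_fun,
    Fintype.card_fin]

end Construction


/-- Proposition 10: for fixed `t ≥ 2` and every `d ≥ 2` with `d ≡ 1 (mod t-1)`, there is
a `d`-regular bipartite graph `G` with exactly `d ((d-1)/(t-1) + 1)^{t-1}` edges whose
distance-`t` chromatic index equals its number of edges. -/
theorem bipartite_regular_graph_line_graph_power_clique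
    (t : ℕ) (ht : 2 ≤ t) (d : ℕ) (hd : 2 ≤ d) (hmod : (t - 1) ∣ (d - 1)) :
    ∃ (V : Type) (_ : Fintype V) (G : SimpleGraph V),
      (∀ v : V, (G.neighborSet v).ncard = d) ∧ BipartiteGraph G ∧
      G.edgeSet.ncard = d * ((d - 1) / (t - 1) + 1) ^ (t - 1) ∧
      distChromIndex G t = (G.edgeSet.ncard : ℕ∞) := by
  classical
  set m := (d - 1) / (t - 1) with hm
  have hnm : (t - 1) * m = d - 1 := Nat.mul_div_cancel' hmod
  refine ⟨Vtx (t-1) (m+1), inferInstance, Gr (t-1) (m+1), ?_, ?_, ?_, ?_⟩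
  · rintro (a | a)
    · rw [deg_inl]
      simp only [Nat.add_sub_cancel]
      omega
    · rw [deg_inr]
      simp only [Nat.add_sub_cancel]
      omega
  · refine ⟨Set.range inl, ?_⟩
    rintro (a|a) (b|b) hadj <;> simp at hadj ⊢
  · rw [← Nat.card_coe_set_eq, edge_card, Nat.add_sub_cancel]
    have h1d : 1 + (t - 1) * m = d := by omega
    rw [h1d, Nat.mul_comm]
  · have htop : ((Gr (t-1) (m+1)).lineGraph).power t = ⊤ := by
      apply power_eq_top
      intro e f
      obtain ⟨W, hW⟩ := line_diam e f
      exact ⟨W, by omega⟩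
    rw [distChromIndex, htop]
    haveI : Fintype ((Gr (t-1) (m+1)).edgeSet) := Set.Finite.fintype (Set.toFinite _)
    rw [SimpleGraph.chromaticNumber_top]
    rw [← Nat.card_coe_set_eq, Nat.card_eq_fintype_card]
end
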